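/- Suppose 0 ≤ |m| − k + 1 < k. Then the dimension of the kernel of the linear map g_{k,m} : W_{k−1} → W_k equals w(m, |m| − k + 1). -/

import Mathlib

open Finsupp

/-- Multiindices `J : Fin n → ℕ` of total degree `j`. -/
abbrev MIdx (n j : ℕ) : Type := {J : Fin n → ℕ // ∑ i, J i = j}

/-- The complex vector space `V_j` with basis `{e_J : |J| = j}`. -/
abbrev V (n j : ℕ) : Type := MIdx n j →₀ ℂ

/-- `J + 1ᵢ` : the multiindex `J` with its `i`-th entry increased by 1. -/
def incr {n : ℕ} (J : Fin n → ℕ) (i : Fin n) : Fin n → ℕ :=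
  Function.update J i (J i + 1)

lemma sum_incr {n : ℕ} (J : Fin n → ℕ) (i : Fin n) :
    ∑ x, incr J i x = (∑ x, J x) + 1 := by
  unfold incr
  rw [Finset.sum_update_of_mem (Finset.mem_univ i),
    Finset.sum_eq_sum_sdiff_singleton_add (Finset.mem_univ i) J]
  ring

/-- The map `f_{j+1,m} : V_j → V_{j+1}`, `e_J ↦ ∑ᵢ (jᵢ+1)(mᵢ−jᵢ) e_{J+1ᵢ}`. -/
noncomputable def fMap (n : ℕ) (m : Fin n → ℕ) (j : ℕ) : V n j →ₗ[ℂ] V n (j + 1) :=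
  Finsupp.lift (V n (j + 1)) ℂ (MIdx n j) fun J =>
    ∑ i, (((J.1 i : ℂ) + 1) * ((m i : ℂ) - (J.1 i : ℂ))) •
      Finsupp.single (⟨incr J.1 i, by rw [sum_incr, J.2]⟩ : MIdx n (j + 1)) (1 : ℂ)

/-- `d(m,j)`: the number of multiindices `J` with `J i ≤ m i` for all `i` and `|J| = j`. -/
noncomputable def dCount (n : ℕ) (m : Fin n → ℕ) (j : ℤ) : ℕ :=
  Set.ncard {J : Fin n → ℕ | (∀ i, J i ≤ m i) ∧ ∑ i, (J i : ℤ) = j}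

/-- `w(m,j) = d(m,j) − d(m,j−1)`. -/
noncomputable def w (n : ℕ) (m : Fin n → ℕ) (j : ℤ) : ℤ :=
  (dCount n m j : ℤ) - (dCount n m (j - 1) : ℤ)
/-- Multiindices of degree `j` bounded by `m`. -/
abbrev WIdx (n : ℕ) (m : Fin n → ℕ) (j : ℕ) : Type :=
  {J : Fin n → ℕ // (∑ i, J i = j) ∧ ∀ i, J i ≤ m i}

/-- The weight space `W_j` of `L_{m_1} ⊗ ⋯ ⊗ L_{m_n}`, with basis
`{e_J : |J| = j, J i ≤ m i}`. -/
abbrev W (n : ℕ) (m : Fin n → ℕ) (j : ℕ) : Type := WIdx n m j →₀ ℂ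

/-- The map `g_{j+1,m} : W_j → W_{j+1}`, `e_J ↦ ∑_{i : jᵢ < mᵢ} e_{J+1ᵢ}`. -/
noncomputable def gMap (n : ℕ) (m : Fin n → ℕ) (j : ℕ) : W n m j →ₗ[ℂ] W n m (j + 1) :=
  Finsupp.lift (W n m (j + 1)) ℂ (WIdx n m j) fun J =>
    ∑ i, if h : J.1 i < m i then
      Finsupp.single (⟨incr J.1 i, by
        refine ⟨by rw [sum_incr, J.2.1], fun x => ?_⟩
        unfold incr
        rcases eq_or_ne x i with rfl | hx
        · simpa using h
        · rw [Function.update_of_ne hx]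
          exact J.2.2 x⟩ : WIdx n m (j + 1)) (1 : ℂ)
    else 0

def decr {n : ℕ} (J : Fin n → ℕ) (i : Fin n) : Fin n → ℕ :=
  Function.update J i (J i - 1)

lemma sum_decr {n : ℕ} (J : Fin n → ℕ) (i : Fin n) (h : 0 < J i) :
    ∑ x, decr J i x = (∑ x, J x) - 1 := by
  unfold decr
  rw [Finset.sum_update_of_mem (Finset.mem_univ i),
    Finset.sum_eq_sum_sdiff_singleton_add (Finset.mem_univ i) J]
  omega

noncomputable def eMap (n : ℕ) (m : Fin n → ℕ) (j : ℕ) : W n m (j + 1) →ₗ[ℂ] W n m j :=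
  Finsupp.lift (W n m j) ℂ (WIdx n m (j + 1)) fun K =>
    ∑ i, if h : 0 < K.1 i then
      (((K.1 i : ℂ)) * ((m i : ℂ) - (K.1 i : ℂ) + 1)) •
        Finsupp.single (⟨decr K.1 i, by
          refine ⟨by rw [sum_decr _ _ h, K.2.1]; rfl, fun x => ?_⟩
          
          -- fix
          
          unfold decr
          rcases eq_or_ne x i with rfl | hx
          · simp only [Function.update_self]
            exact le_trans (Nat.sub_le _ _) (K.2.2 x)
          · rw [Function.update_of_ne hx]
            exact K.2.2 x⟩ : WIdx n m j) (1 : ℂ)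
    else 0

lemma lift_single {M : Type*} [AddCommMonoid M] [Module ℂ M] {ι : Type*} (f : ι → M)
    (a : ι) (b : ℂ) : Finsupp.lift M ℂ ι f (Finsupp.single a b) = b • f a := by
  rw [Finsupp.lift_apply, Finsupp.sum_single_index (by simp)]

/-- ambient free space on all multiindices -/
abbrev V' (n : ℕ) : Type := (Fin n → ℕ) →₀ ℂ

noncomputable def emb (n : ℕ) (m : Fin n → ℕ) (j : ℕ) : W n m j →ₗ[ℂ] V' n :=
  Finsupp.lmapDomain ℂ ℂ Subtype.val

lemma emb_injective (n : ℕ) (m : Fin n → ℕ) (j : ℕ) : Function.Injective (emb n m j) :=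
  Finsupp.mapDomain_injective Subtype.val_injective

lemma emb_single (n : ℕ) (m : Fin n → ℕ) (j : ℕ) (J : WIdx n m j) (b : ℂ) :
    emb n m j (Finsupp.single J b) = Finsupp.single J.1 b := by
  simp [emb, Finsupp.mapDomain_single]

noncomputable def G (n : ℕ) (m : Fin n → ℕ) : V' n →ₗ[ℂ] V' n :=
  Finsupp.lift (V' n) ℂ (Fin n → ℕ) fun J =>
    ∑ i, if J i < m i then Finsupp.single (incr J i) (1 : ℂ) else 0

noncomputable def E (n : ℕ) (m : Fin n → ℕ) : V' n →ₗ[ℂ] V' n :=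
  Finsupp.lift (V' n) ℂ (Fin n → ℕ) fun K =>
    ∑ i, (((K i : ℂ)) * ((m i : ℂ) - (K i : ℂ) + 1)) • Finsupp.single (decr K i) (1 : ℂ)

lemma emb_gMap (n : ℕ) (m : Fin n → ℕ) (j : ℕ) (x : W n m j) :
    emb n m (j + 1) (gMap n m j x) = G n m (emb n m j x) := by
  induction x using Finsupp.induction_linear with
  | zero => simp
  | add a b ha hb => simp [map_add, ha, hb]
  | single J b =>
    rw [gMap, lift_single, emb_single, G, lift_single, map_smul]
    congr 1
    rw [map_sum]
    refine Finset.sum_congr rfl fun i _ => ?_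
    by_cases h : J.1 i < m i
    · rw [dif_pos h, if_pos h, emb_single]
    · rw [dif_neg h, if_neg h, map_zero]

lemma emb_eMap (n : ℕ) (m : Fin n → ℕ) (j : ℕ) (x : W n m (j + 1)) :
    emb n m j (eMap n m j x) = E n m (emb n m (j + 1) x) := by
  induction x using Finsupp.induction_linear with
  | zero => simp
  | add a b ha hb => simp [map_add, ha, hb]
  | single K b =>
    rw [eMap, lift_single, emb_single, E, lift_single, map_smul]
    congr 1
    rw [map_sum]
    refine Finset.sum_congr rfl fun i _ => ?_
    by_cases h : 0 < K.1 i
    · rw [dif_pos h, map_smul, emb_single]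
    · rw [dif_neg h]
      have : (K.1 i : ℂ) = 0 := by simp [Nat.eq_zero_of_not_pos h]
      simp [this]

lemma decr_incr_comm {n : ℕ} (J : Fin n → ℕ) {i l : Fin n} (h : i ≠ l) :
    decr (incr J i) l = incr (decr J l) i := by
  unfold incr decr
  rw [Function.update_of_ne (Ne.symm h), Function.update_of_ne h, Function.update_comm h]

lemma decr_incr_same {n : ℕ} (J : Fin n → ℕ) (i : Fin n) : decr (incr J i) i = J := by
  unfold incr decr
  simp [Function.update_idem]

lemma incr_decr_same {n : ℕ} (J : Fin n → ℕ) (i : Fin n) (h : 0 < J i) :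
    incr (decr J i) i = J := by
  unfold incr decr
  simp only [Function.update_self, Function.update_idem]
  rw [Nat.sub_add_cancel h, Function.update_eq_self]

lemma ite_sum {M : Type*} [AddCommMonoid M] {ι : Type*} [Fintype ι] {c : Prop} [Decidable c]
    (f : ι → M) : (if c then ∑ l, f l else 0) = ∑ l, if c then f l else 0 := by
  split <;> simp

lemma EG_single (n : ℕ) (m : Fin n → ℕ) (J : Fin n → ℕ) (hb : ∀ i, J i ≤ m i) :
    E n m (G n m (Finsupp.single J 1)) = G n m (E n m (Finsupp.single J 1))
      + ((∑ i, (m i : ℂ)) - 2 * ∑ i, (J i : ℂ)) • Finsupp.single J 1 := by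
  have hG : ∀ K : Fin n → ℕ, G n m (Finsupp.single K (1:ℂ))
      = ∑ i, if K i < m i then Finsupp.single (incr K i) (1:ℂ) else 0 := by
    intro K; rw [G, lift_single, one_smul]
  have hE : ∀ K : Fin n → ℕ, E n m (Finsupp.single K (1:ℂ))
      = ∑ l, (((K l : ℂ)) * ((m l : ℂ) - (K l : ℂ) + 1)) • Finsupp.single (decr K l) (1:ℂ) := by
    intro K; rw [E, lift_single, one_smul]
  rw [hG, map_sum, hE, map_sum]
  have lhs_eq : ∀ i : Fin n, E n m (if J i < m i then Finsupp.single (incr J i) (1:ℂ) else 0)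
      = ∑ l, if J i < m i then
          (((incr J i l : ℂ)) * ((m l : ℂ) - (incr J i l : ℂ) + 1)) •
            Finsupp.single (decr (incr J i) l) (1:ℂ) else 0 := by
    intro i
    rw [apply_ite (E n m), map_zero, hE, ite_sum]
  have rhs_eq : ∀ l : Fin n,
      G n m ((((J l : ℂ)) * ((m l : ℂ) - (J l : ℂ) + 1)) • Finsupp.single (decr J l) (1:ℂ))
      = ∑ i, if decr J l i < m i then
          (((J l : ℂ)) * ((m l : ℂ) - (J l : ℂ) + 1)) •
            Finsupp.single (incr (decr J l) i) (1:ℂ) else 0 := by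
    intro l
    rw [map_smul, hG, Finset.smul_sum]
    refine Finset.sum_congr rfl fun i _ => ?_
    rw [smul_ite, smul_zero]
  simp only [lhs_eq, rhs_eq]
  have key : ∀ i l : Fin n,
      (if J i < m i then
          (((incr J i l : ℂ)) * ((m l : ℂ) - (incr J i l : ℂ) + 1)) •
            Finsupp.single (decr (incr J i) l) (1:ℂ) else 0)
      = (if decr J l i < m i then
          (((J l : ℂ)) * ((m l : ℂ) - (J l : ℂ) + 1)) •
            Finsupp.single (incr (decr J l) i) (1:ℂ) else 0)
        + (if i = l then ((m i : ℂ) - 2 * (J i : ℂ)) • Finsupp.single J (1:ℂ) else 0) := by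
    intro i l
    rcases eq_or_ne i l with rfl | hil
    · -- diagonal case
      have hif : (if i = i then ((m i : ℂ) - 2 * (J i : ℂ)) • Finsupp.single J (1:ℂ) else 0)
          = ((m i : ℂ) - 2 * (J i : ℂ)) • Finsupp.single J (1:ℂ) := if_pos rfl
      rw [hif]
      have e1 : incr J i i = J i + 1 := by unfold incr; rw [Function.update_self]
      have e2 : decr J i i = J i - 1 := by unfold decr; rw [Function.update_self]
      rw [e1, e2, decr_incr_same]
      rcases Nat.eq_zero_or_pos (J i) with h0 | hpos
      · have hd : decr J i = J := by
          unfold decr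
          simpa [h0] using Function.update_eq_self i J
        rw [hd, h0]
        simp only [Nat.cast_zero, zero_mul, zero_smul, ite_self, zero_add, mul_zero, sub_zero]
        by_cases hm : 0 < m i
        · rw [if_pos hm]
          congr 1
          push_cast
          ring
        · rw [if_neg hm]
          have : (m i : ℂ) = 0 := by simp [Nat.eq_zero_of_not_pos hm]
          rw [this, zero_smul]
      · rw [incr_decr_same J i hpos]
        rw [if_pos (show J i - 1 < m i from by have := hb i; omega)]
        by_cases hlt : J i < m i
        · rw [if_pos hlt, ← add_smul]
          congr 1
          push_cast
          ring
        · have hm : m i = J i := le_antisymm (not_lt.mp hlt) (hb i)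
          rw [if_neg hlt, ← add_smul]
          have hz : ((J i : ℂ)) * ((m i : ℂ) - (J i : ℂ) + 1) + ((m i : ℂ) - 2 * (J i : ℂ)) = 0 := by
            rw [hm]; push_cast; ring
          rw [hz, zero_smul]
    · -- off-diagonal case
      rw [if_neg hil, add_zero]
      have e1 : incr J i l = J l := by unfold incr; rw [Function.update_of_ne (Ne.symm hil)]
      have e2 : decr J l i = J i := by unfold decr; rw [Function.update_of_ne hil]
      rw [e1, e2, decr_incr_comm J hil]
  simp only [key]
  simp only [Finset.sum_add_distrib]
  congr 1
  · exact Finset.sum_comm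
  · simp only [Finset.sum_ite_eq, Finset.mem_univ, if_true]
    rw [← Finset.sum_smul]
    congr 1
    rw [Finset.sum_sub_distrib, ← Finset.mul_sum]

lemma relation (n : ℕ) (m : Fin n → ℕ) (j : ℕ) (x : W n m (j + 1)) :
    eMap n m (j + 1) (gMap n m (j + 1) x)
      = gMap n m j (eMap n m j x) + ((∑ i, (m i : ℂ)) - 2 * ((j : ℂ) + 1)) • x := by
  induction x using Finsupp.induction_linear with
  | zero => simp
  | add a b ha hb => rw [map_add, map_add, map_add, map_add, smul_add, ha, hb]; abel
  | single J b =>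
    apply emb_injective n m (j + 1)
    rw [map_add, map_smul, emb_eMap, emb_gMap, emb_gMap, emb_eMap, emb_single]
    have hsum : ∑ i, (J.1 i : ℂ) = (j : ℂ) + 1 := by
      rw [← Nat.cast_sum, J.2.1]; push_cast; ring
    have hb1 : Finsupp.single J.1 b = b • Finsupp.single J.1 (1 : ℂ) := by
      rw [Finsupp.smul_single', mul_one]
    simp only [hb1, map_smul]
    rw [EG_single n m J.1 J.2.2, hsum, smul_add, smul_comm b]

instance widx_finite (n : ℕ) (m : Fin n → ℕ) (j : ℕ) : Finite (WIdx n m j) := by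
  apply Finite.of_injective
    (fun J : WIdx n m j => (fun i => (⟨J.1 i, Nat.lt_succ_of_le (J.2.2 i)⟩ : Fin (m i + 1))))
  intro a b h
  apply Subtype.ext
  funext i
  exact congrArg Fin.val (congrFun h i)

lemma up (n : ℕ) (m : Fin n → ℕ) :
    ∀ (t j : ℕ) (q : ℤ), (∑ i, m i) + 1 ≤ j + t → q < 0 → (∑ i, m i) + 2 ≤ 2 * j →
      ∀ x : W n m j, eMap n m j (gMap n m j x) = (q : ℂ) • x → x = 0 := by
  intro t
  induction t with
  | zero =>
    intro j q hjt hq hj x _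
    haveI : IsEmpty (WIdx n m j) := ⟨fun J => by
      have h1 := J.2.1
      have h2 : ∑ i, J.1 i ≤ ∑ i, m i := Finset.sum_le_sum fun i _ => J.2.2 i
      omega⟩
    exact Finsupp.ext fun a => (IsEmpty.false a).elim
  | succ t ih =>
    intro j q hjt hq hj x hx
    have hq0 : (q : ℂ) ≠ 0 := by
      simpa using (Int.cast_injective (α := ℂ)).ne hq.ne
    set y := gMap n m j x with hy
    have h1 : eMap n m (j + 1) (gMap n m (j + 1) y)
        = (((q + (∑ i, m i : ℕ) - 2 * (j + 1) : ℤ)) : ℂ) • y := by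
      rw [relation n m j y]
      have e : eMap n m j y = (q : ℂ) • x := hx
      rw [e, map_smul, ← hy, ← add_smul]
      congr 1
      push_cast
      ring
    have hy0 : y = 0 := by
      refine ih (j + 1) (q + (∑ i, m i : ℕ) - 2 * (j + 1)) (by omega) (by omega) (by omega) y h1
    have : (q : ℂ) • x = 0 := by rw [← hx, hy0, map_zero]
    rcases smul_eq_zero.mp this with h | h
    · exact absurd h hq0
    · exact h

lemma g_surj (n : ℕ) (m : Fin n → ℕ) (k' : ℕ) (h : (∑ i, m i) + 2 ≤ 2 * (k' + 1)) :
    Function.Surjective (gMap n m k') := by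
  haveI : FiniteDimensional ℂ (W n m (k' + 1)) := Module.Finite.finsupp
  set T : W n m (k' + 1) →ₗ[ℂ] W n m (k' + 1) := (gMap n m k').comp (eMap n m k') with hT
  have h0 : ∀ x : W n m (k' + 1), T x = 0 → x = 0 := by
    intro x hx
    have hr := relation n m k' x
    rw [show gMap n m k' (eMap n m k' x) = T x from rfl, hx, zero_add] at hr
    have hc : ((∑ i, (m i : ℂ)) - 2 * ((k' : ℂ) + 1))
        = (((∑ i, m i : ℕ) - 2 * (k' + 1) : ℤ) : ℂ) := by
      push_cast
      ring
    rw [hc] at hr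
    exact up n m ((∑ i, m i) + 1) (k' + 1) _ (by omega) (by omega) (by omega) x hr
  have hinj : Function.Injective T := by
    intro a b hab
    have := h0 (a - b) (by rw [map_sub, hab, sub_self])
    exact sub_eq_zero.mp this
  have hTsur : Function.Surjective T := LinearMap.injective_iff_surjective.mp hinj
  intro z
  obtain ⟨y, hy⟩ := hTsur z
  exact ⟨eMap n m k' y, hy⟩


lemma finrank_W (n : ℕ) (m : Fin n → ℕ) (j : ℕ) :
    Module.finrank ℂ (W n m j) = Nat.card (WIdx n m j) := by
  haveI := Fintype.ofFinite (WIdx n m j)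
  rw [Module.finrank_finsupp_self, Nat.card_eq_fintype_card]

lemma card_eq_dCount (n : ℕ) (m : Fin n → ℕ) (j : ℕ) :
    Nat.card (WIdx n m j) = dCount n m (j : ℤ) := by
  rw [dCount, ← Nat.card_coe_set_eq]
  refine Nat.card_congr ⟨fun J => ⟨J.1, ⟨J.2.2, by rw [← Nat.cast_sum, J.2.1]⟩⟩,
    fun J => ⟨J.1, ⟨?_, J.2.1⟩⟩, fun J => rfl, fun J => rfl⟩
  have hz := J.2.2
  rw [← Nat.cast_sum] at hz
  exact_mod_cast hz

lemma dCount_symm (n : ℕ) (m : Fin n → ℕ) (j : ℤ) :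
    dCount n m ((∑ i, (m i : ℤ)) - j) = dCount n m j := by
  unfold dCount
  have himg : (fun (J : Fin n → ℕ) i => m i - J i) ''
        {J : Fin n → ℕ | (∀ i, J i ≤ m i) ∧ ∑ i, (J i : ℤ) = j}
      = {J : Fin n → ℕ | (∀ i, J i ≤ m i) ∧ ∑ i, (J i : ℤ) = (∑ i, (m i : ℤ)) - j} := by
    ext K
    constructor
    · rintro ⟨J, ⟨hJb, hJs⟩, rfl⟩
      refine ⟨fun i => Nat.sub_le _ _, ?_⟩
      have hc : ∑ i, (((m i - J i : ℕ)) : ℤ) = ∑ i, ((m i : ℤ) - (J i : ℤ)) :=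
        Finset.sum_congr rfl fun i _ => Nat.cast_sub (hJb i)
      simpa [hc, Finset.sum_sub_distrib, hJs] using rfl
    · rintro ⟨hKb, hKs⟩
      refine ⟨fun i => m i - K i, ⟨⟨fun i => Nat.sub_le _ _, ?_⟩, ?_⟩⟩
      · have hc : ∑ i, (((m i - K i : ℕ)) : ℤ) = ∑ i, ((m i : ℤ) - (K i : ℤ)) :=
          Finset.sum_congr rfl fun i _ => Nat.cast_sub (hKb i)
        rw [hc, Finset.sum_sub_distrib, hKs]
        ring
      · funext i
        exact Nat.sub_sub_self (hKb i)
  have hinj : Set.InjOn (fun (J : Fin n → ℕ) i => m i - J i)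
      {J : Fin n → ℕ | (∀ i, J i ≤ m i) ∧ ∑ i, (J i : ℤ) = j} := by
    rintro a ⟨ha, _⟩ b ⟨hb, _⟩ hab
    funext i
    have h1 := congrFun hab i
    have ha' := ha i
    have hb' := hb i
    simp only at h1
    omega
  rw [← himg, Set.ncard_image_of_injOn hinj]


/-- If `0 ≤ |m| − k + 1 < k`, then `dim ker (g_{k,m} : W_{k−1} → W_k) = w(m, |m| − k + 1)`. -/
theorem kernel_dim_resonant_irreducible (n k : ℕ) (hn : 1 ≤ n) (hk : 1 ≤ k) (m : Fin n → ℕ)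
    (h0 : 0 ≤ (∑ i, (m i : ℤ)) - k + 1) (h1 : (∑ i, (m i : ℤ)) - k + 1 < k) :
    (Module.finrank ℂ (LinearMap.ker (gMap n m (k - 1))) : ℤ)
      = w n m ((∑ i, (m i : ℤ)) - k + 1) := by
  obtain ⟨k', rfl⟩ : ∃ k', k = k' + 1 := ⟨k - 1, by omega⟩
  have hSnat : (∑ i, (m i : ℤ)) = ((∑ i, m i : ℕ) : ℤ) := (Nat.cast_sum _ _).symm
  have hk2 : (∑ i, m i) + 2 ≤ 2 * (k' + 1) := by
    rw [hSnat] at h1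
    push_cast at h1
    omega
  have hsurj := g_surj n m k' hk2
  haveI : FiniteDimensional ℂ (W n m k') := Module.Finite.finsupp
  haveI : FiniteDimensional ℂ (W n m (k' + 1)) := Module.Finite.finsupp
  have hrange : LinearMap.range (gMap n m k') = ⊤ := LinearMap.range_eq_top.mpr hsurj
  have hrn := LinearMap.finrank_range_add_finrank_ker (gMap n m k')
  rw [hrange, finrank_top] at hrn
  have e1 : Module.finrank ℂ (W n m k') = dCount n m (k' : ℤ) := by
    rw [finrank_W, card_eq_dCount]
  have e2 : Module.finrank ℂ (W n m (k' + 1)) = dCount n m ((k' : ℤ) + 1) := by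
    rw [finrank_W, card_eq_dCount]
    push_cast
    ring_nf
  have hg : (Module.finrank ℂ (LinearMap.ker (gMap n m k')) : ℤ)
      = (dCount n m (k' : ℤ) : ℤ) - (dCount n m ((k' : ℤ) + 1) : ℤ) := by
    rw [← e1, ← e2]
    omega
  have d1 : dCount n m ((∑ i, (m i : ℤ)) - ((k' + 1 : ℕ) : ℤ) + 1) = dCount n m (k' : ℤ) := by
    rw [show (∑ i, (m i : ℤ)) - ((k' + 1 : ℕ) : ℤ) + 1 = (∑ i, (m i : ℤ)) - k' by push_cast; ring]
    exact dCount_symm n m (k' : ℤ)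
  have d2 : dCount n m ((∑ i, (m i : ℤ)) - ((k' + 1 : ℕ) : ℤ) + 1 - 1) = dCount n m ((k' : ℤ) + 1) := by
    rw [show (∑ i, (m i : ℤ)) - ((k' + 1 : ℕ) : ℤ) + 1 - 1
        = (∑ i, (m i : ℤ)) - ((k' : ℤ) + 1) by push_cast; ring]
    exact dCount_symm n m ((k' : ℤ) + 1)
  have final : (Module.finrank ℂ (LinearMap.ker (gMap n m k')) : ℤ)
      = w n m ((∑ i, (m i : ℤ)) - ((k' + 1 : ℕ) : ℤ) + 1) := by
    rw [hg, w, d1, d2]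
  exact final
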